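/- Let Y and Z be unbounded subspaces of a metric space (X,d) and let p ∈ X. Then Y and Z are strongly asymptotically equivalent (asymptotically equivalent with respect to every scaling sequence) if and only if lim_{t→∞} ε(t)/t = 0, where ε(t) = max{ε(t,Z,Y), ε(t,Y,Z)}. -/

import Mathlib

open Filter Topology

/-- `Seq(A, r̃)` for a subspace `A` of `X`: sequences of points of `A` for which the
finite limit `lim dist (x n) p / r n` exists. -/
def SeqIn {X : Type*} [MetricSpace X] (A : Set X) (p : X) (r : ℕ → ℝ) : Set (ℕ → X) :=
  {x | (∀ n, x n ∈ A) ∧ ∃ l : ℝ, Tendsto (fun n => dist (x n) p / r n) atTop (𝓝 l)}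

/-- The pseudometric `d^r̃(x̃, ỹ) = limsup_{n → ∞} dist (x n) (y n) / r n`. -/
noncomputable def dSup {X : Type*} [MetricSpace X] (r : ℕ → ℝ) (x y : ℕ → X) : ℝ :=
  Filter.limsup (fun n => dist (x n) (y n) / r n) Filter.atTop

/-- `Y` and `Z` are asymptotically equivalent with respect to `r̃`: there are maps
`Φ : Seq(Y, r̃) → Seq(Z, r̃)` and `Ψ : Seq(Z, r̃) → Seq(Y, r̃)` with
`d^r̃(ỹ, Φ ỹ) = 0` and `d^r̃(z̃, Ψ z̃) = 0`. -/
def AsympEquiv {X : Type*} [MetricSpace X] (p : X) (r : ℕ → ℝ) (Y Z : Set X) : Prop :=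
  (∃ Φ : (ℕ → X) → (ℕ → X), (∀ y ∈ SeqIn Y p r, Φ y ∈ SeqIn Z p r) ∧
      ∀ y ∈ SeqIn Y p r, dSup r y (Φ y) = 0) ∧
  (∃ Ψ : (ℕ → X) → (ℕ → X), (∀ z ∈ SeqIn Z p r, Ψ z ∈ SeqIn Y p r) ∧
      ∀ z ∈ SeqIn Z p r, dSup r z (Ψ z) = 0)

/-- `ε(t, Z, Y) = sup_{z ∈ S_t^Z} inf_{y ∈ Y} d(z, y)` (equal to `0` when
`S_t^Z = ∅`, by the convention of the real-valued `iSup`), and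
`ε(t) = max (ε(t,Z,Y)) (ε(t,Y,Z))`. -/
noncomputable def epsT {X : Type*} [MetricSpace X] (p : X) (Y Z : Set X) (t : ℝ) : ℝ :=
  max (⨆ z : {z : X // z ∈ Z ∧ dist z p = t}, ⨅ y : Y, dist (z : X) (y : X))
    (⨆ y : {y : X // y ∈ Y ∧ dist y p = t}, ⨅ z : Z, dist (y : X) (z : X))

section aux
variable {X : Type*} [MetricSpace X]

lemma bddBelow_dist_range (x : X) (B : Set X) :
    BddBelow (Set.range fun b : B => dist x (b : X)) := by
  refine ⟨0, ?_⟩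
  rintro _ ⟨b, rfl⟩
  exact dist_nonneg

lemma infdist_le_sup (p : X) (A B : Set X) (x : X) (hx : x ∈ A) :
    (⨅ b : B, dist x (b : X)) ≤
      ⨆ a : {a : X // a ∈ A ∧ dist a p = dist x p}, ⨅ b : B, dist (a : X) (b : X) := by
  rcases B.eq_empty_or_nonempty with hB | ⟨b₀, hb₀⟩
  · subst hB
    rw [show (⨅ b : (∅ : Set X), dist x (b : X)) = 0 from Real.iInf_of_isEmpty _]
    exact Real.iSup_nonneg fun a => Real.iInf_nonneg fun b => dist_nonneg
  · refine le_ciSup (f := fun a : {a : X // a ∈ A ∧ dist a p = dist x p} =>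
      ⨅ b : B, dist (a : X) (b : X)) ?_ ⟨x, hx, rfl⟩
    refine ⟨dist x p + dist b₀ p, ?_⟩
    rintro _ ⟨⟨a, ha, hat⟩, rfl⟩
    calc (⨅ b : B, dist a (b : X)) ≤ dist a (⟨b₀, hb₀⟩ : B) :=
          ciInf_le (bddBelow_dist_range _ _) _
    _ ≤ dist a p + dist p b₀ := dist_triangle _ _ _
    _ = dist x p + dist b₀ p := by rw [hat, dist_comm p b₀]

lemma sup_le_lin (p : X) (A B : Set X) (b₀ : X) (hb₀ : b₀ ∈ B) (t : ℝ) (ht : 0 ≤ t) :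
    (⨆ a : {a : X // a ∈ A ∧ dist a p = t}, ⨅ b : B, dist (a : X) (b : X)) ≤ t + dist b₀ p := by
  refine Real.iSup_le (fun a => ?_) (by positivity)
  calc (⨅ b : B, dist (a : X) (b : X)) ≤ dist (a : X) (⟨b₀, hb₀⟩ : B) :=
        ciInf_le (bddBelow_dist_range _ _) _
  _ ≤ dist (a : X) p + dist p b₀ := dist_triangle _ _ _
  _ = t + dist b₀ p := by rw [a.2.2, dist_comm p b₀]

lemma approx_pt (p : X) (A B : Set X) (hB : B.Nonempty) (x : X) (hx : x ∈ A)
    (τ : ℝ) (hτ : 0 < τ) :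
    ∃ b ∈ B, dist x b ≤
      (⨆ a : {a : X // a ∈ A ∧ dist a p = dist x p}, ⨅ b : B, dist (a : X) (b : X)) + τ := by
  haveI : Nonempty B := hB.to_subtype
  have h1 : (⨅ b : B, dist x (b : X)) <
      (⨆ a : {a : X // a ∈ A ∧ dist a p = dist x p}, ⨅ b : B, dist (a : X) (b : X)) + τ :=
    lt_of_le_of_lt (infdist_le_sup p A B x hx) (by linarith)
  obtain ⟨b, hb⟩ := exists_lt_of_ciInf_lt h1
  exact ⟨b, b.2, hb.le⟩

lemma eps_ratio_tendsto (ε : ℝ → ℝ) (hε0 : ∀ t, 0 ≤ ε t) (C : ℝ)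
    (hlin : ∀ t, 0 ≤ t → ε t ≤ t + C)
    (htend : Tendsto (fun t => ε t / t) atTop (𝓝 0))
    (t r : ℕ → ℝ) (ht0 : ∀ n, 0 ≤ t n) (hr : ∀ n, 0 < r n)
    (hrtop : Tendsto r atTop atTop) (l : ℝ)
    (hl : Tendsto (fun n => t n / r n) atTop (𝓝 l)) :
    Tendsto (fun n => ε (t n) / r n) atTop (𝓝 0) := by
  have hl0 : 0 ≤ l := le_of_tendsto_of_tendsto tendsto_const_nhds hl
    (Eventually.of_forall fun n => div_nonneg (ht0 n) (hr n).le)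
  set M : ℝ := l + 1 with hM
  have hM0 : 0 < M := by linarith
  rw [Metric.tendsto_nhds]
  intro η hη
  set δ : ℝ := η / (2 * M) with hδdef
  have hδ : 0 < δ := by positivity
  have h1 : ∀ᶠ n in atTop, t n ≤ M * r n := by
    filter_upwards [hl.eventually (gt_mem_nhds (show l < M by linarith))] with n hn
    rw [div_lt_iff₀ (hr n)] at hn
    linarith
  have h2 : ∀ᶠ t' in atTop, |ε t' / t'| < δ := by
    have := htend.eventually (Metric.ball_mem_nhds (0:ℝ) hδ)
    filter_upwards [this] with s hs
    simpa [Real.dist_eq, abs_div] using hs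
  obtain ⟨T, hT1, hT⟩ : ∃ T : ℝ, 1 ≤ T ∧ ∀ t' ≥ T, |ε t' / t'| < δ := by
    rw [eventually_atTop] at h2
    obtain ⟨T, hT⟩ := h2
    exact ⟨max T 1, le_max_right _ _, fun t' ht' => hT t' ((le_max_left _ _).trans ht')⟩
  set C' : ℝ := max C 0 + T
  have hC' : 0 < C' := by
    have h9 : (0:ℝ) ≤ max C 0 := le_max_right _ _
    simp only [C']
    linarith
  have h3 : ∀ᶠ n in atTop, C' / η < r n := hrtop.eventually_gt_atTop _
  filter_upwards [h1, h3] with n hn1 hn3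
  have hrn := hr n
  have habs : dist (ε (t n) / r n) 0 = ε (t n) / r n := by
    rw [Real.dist_eq, sub_zero, abs_of_nonneg (div_nonneg (hε0 _) hrn.le)]
  rw [habs]
  by_cases hcase : T ≤ t n
  · have htn : 0 < t n := lt_of_lt_of_le (by linarith) hcase
    have := hT (t n) hcase
    rw [abs_of_nonneg (div_nonneg (hε0 _) htn.le), div_lt_iff₀ htn] at this
    have h5 : ε (t n) < δ * (M * r n) := by
      calc ε (t n) < δ * t n := this
      _ ≤ δ * (M * r n) := by nlinarith
    rw [div_lt_iff₀ hrn]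
    calc ε (t n) < δ * (M * r n) := h5
    _ = (η / 2) * r n := by
        field_simp [hδdef]
        rw [hδdef]; field_simp [hM0.ne']
    _ ≤ η * r n := by nlinarith
  · push_neg at hcase
    have h6 : ε (t n) ≤ t n + C := hlin _ (ht0 n)
    have h7 : ε (t n) < C' := by
      have : C ≤ max C 0 := le_max_left _ _
      simp only [C']
      linarith
    rw [div_lt_iff₀ hrn]
    rw [div_lt_iff₀ hη] at hn3
    linarith

lemma oneSideSuff (p : X) (A B : Set X) (b₀ : X) (hb₀ : b₀ ∈ B)
    (ε : ℝ → ℝ) (hε0 : ∀ t, 0 ≤ ε t) (C : ℝ)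
    (hlin : ∀ t, 0 ≤ t → ε t ≤ t + C)
    (happrox : ∀ x ∈ A, ∀ τ > (0:ℝ), ∃ b ∈ B, dist x b ≤ ε (dist x p) + τ)
    (htend : Tendsto (fun t => ε t / t) atTop (𝓝 0))
    (r : ℕ → ℝ) (hr : ∀ n, 0 < r n) (hrtop : Tendsto r atTop atTop) :
    ∃ Φ : (ℕ → X) → (ℕ → X), (∀ a ∈ SeqIn A p r, Φ a ∈ SeqIn B p r) ∧
      ∀ a ∈ SeqIn A p r, dSup r a (Φ a) = 0 := by
  classical
  set Φ : (ℕ → X) → (ℕ → X) := fun x n =>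
    if h : x n ∈ A then (happrox (x n) h (r n / (n + 1))
      (div_pos (hr n) (by positivity))).choose else b₀ with hΦ
  have key : ∀ (x : ℕ → X), (∀ n, x n ∈ A) → ∀ n,
      Φ x n ∈ B ∧ dist (x n) (Φ x n) ≤ ε (dist (x n) p) + r n / (n + 1) := by
    intro x hx n
    have h := hx n
    simp only [hΦ, dif_pos h]
    obtain ⟨hb, hd⟩ := (happrox (x n) h (r n / (n + 1)) (div_pos (hr n) (by positivity))).choose_spec
    exact ⟨hb, hd⟩
  have main : ∀ a ∈ SeqIn A p r,
      Tendsto (fun n => dist (a n) (Φ a n) / r n) atTop (𝓝 0) := by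
    rintro a ⟨haA, l, hal⟩
    have hb : Tendsto (fun n => ε (dist (a n) p) / r n + 1 / ((n : ℝ) + 1)) atTop (𝓝 0) := by
      have h1 := eps_ratio_tendsto ε hε0 C hlin htend (fun n => dist (a n) p) r
        (fun n => dist_nonneg) hr hrtop l hal
      simpa using h1.add tendsto_one_div_add_atTop_nhds_zero_nat
    refine squeeze_zero (fun n => div_nonneg dist_nonneg (hr n).le) (fun n => ?_) hb
    have h2 := (key a haA n).2
    have hrn := hr n
    have h3 : (ε (dist (a n) p) + r n / (n + 1)) / r n
        = ε (dist (a n) p) / r n + 1 / ((n : ℝ) + 1) := by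
      rw [add_div]
      congr 1
      rw [div_div, mul_comm ((n:ℝ)+1) (r n), ← div_div, div_self (hr n).ne']
    calc dist (a n) (Φ a n) / r n ≤ (ε (dist (a n) p) + r n / (n + 1)) / r n :=
          div_le_div_of_nonneg_right h2 hrn.le
    _ = _ := h3
  refine ⟨Φ, ?_, ?_⟩
  · rintro a ha
    obtain ⟨haA, l, hal⟩ := ha
    refine ⟨fun n => (key a haA n).1, l, ?_⟩
    have herr : Tendsto (fun n => (dist (Φ a n) p - dist (a n) p) / r n) atTop (𝓝 0) := by
      refine squeeze_zero_norm (a := fun n => dist (a n) (Φ a n) / r n) (fun n => ?_)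
        (main a ⟨haA, l, hal⟩)
      rw [Real.norm_eq_abs, abs_div, abs_of_pos (hr n)]
      refine div_le_div_of_nonneg_right ?_ (hr n).le
      calc |dist (Φ a n) p - dist (a n) p| ≤ dist (Φ a n) (a n) := abs_dist_sub_le _ _ _
      _ = dist (a n) (Φ a n) := dist_comm _ _
    have : Tendsto (fun n => dist (a n) p / r n + (dist (Φ a n) p - dist (a n) p) / r n)
        atTop (𝓝 (l + 0)) := hal.add herr
    rw [add_zero] at this
    convert this using 2 with n
    ring
  · intro a ha
    exact (main a ha).limsup_eq

lemma oneSideNec (p : X) (A B : Set X) (δ : ℝ) (hδ : 0 < δ)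
    (hfr : ∀ T : ℝ, ∃ t ≥ T, δ * t ≤
      ⨆ a : {a : X // a ∈ A ∧ dist a p = t}, ⨅ b : B, dist (a : X) (b : X)) :
    ∃ r : ℕ → ℝ, (∀ n, 0 < r n) ∧ Tendsto r atTop atTop ∧
      ¬ ∃ Ψ : (ℕ → X) → (ℕ → X), (∀ a ∈ SeqIn A p r, Ψ a ∈ SeqIn B p r) ∧
        ∀ a ∈ SeqIn A p r, dSup r a (Ψ a) = 0 := by
  classical
  have hsel : ∀ n : ℕ, ∃ t : ℝ, t ≥ (n : ℝ) + 1 ∧ δ * t ≤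
      ⨆ a : {a : X // a ∈ A ∧ dist a p = t}, ⨅ b : B, dist (a : X) (b : X) := by
    intro n
    obtain ⟨t, ht, h⟩ := hfr ((n : ℝ) + 1)
    exact ⟨t, ht, h⟩
  choose g hg1 hg2 using hsel
  have hgpos : ∀ n, 0 < g n := fun n => lt_of_lt_of_le (by positivity) (hg1 n)
  have hgtop : Tendsto g atTop atTop :=
    tendsto_atTop_mono (fun n => le_trans (by linarith) (hg1 n))
      (tendsto_natCast_atTop_atTop)
  have hsel2 : ∀ n : ℕ, ∃ a : X, a ∈ A ∧ dist a p = g n ∧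
      δ / 2 * g n < ⨅ b : B, dist a (b : X) := by
    intro n
    haveI hne : Nonempty {a : X // a ∈ A ∧ dist a p = g n} := by
      by_contra h
      rw [not_nonempty_iff] at h
      have h0 : (⨆ a : {a : X // a ∈ A ∧ dist a p = g n},
          ⨅ b : B, dist (a : X) (b : X)) = 0 := Real.iSup_of_isEmpty _
      have := hg2 n
      rw [h0] at this
      nlinarith [hgpos n]
    have hlt : δ / 2 * g n < ⨆ a : {a : X // a ∈ A ∧ dist a p = g n},
        ⨅ b : B, dist (a : X) (b : X) := by
      refine lt_of_lt_of_le ?_ (hg2 n)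
      nlinarith [hgpos n]
    obtain ⟨⟨a, haA, haD⟩, ha⟩ := exists_lt_of_lt_ciSup hlt
    exact ⟨a, haA, haD, ha⟩
  choose a haA haD haI using hsel2
  refine ⟨g, hgpos, hgtop, ?_⟩
  rintro ⟨Ψ, hΨmem, hΨ0⟩
  have hone : Tendsto (fun n => dist (a n) p / g n) atTop (𝓝 1) := by
    have : ∀ n, dist (a n) p / g n = 1 := fun n => by
      rw [haD n, div_self (hgpos n).ne']
    simp only [this]
    exact tendsto_const_nhds
  have haSeq : a ∈ SeqIn A p g := ⟨haA, 1, hone⟩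
  obtain ⟨hbB, lb, hbl⟩ := hΨmem a haSeq
  have hzero := hΨ0 a haSeq
  set f : ℕ → ℝ := fun n => dist (a n) (Ψ a n) / g n with hf
  have hlow : ∀ n, δ / 2 ≤ f n := by
    intro n
    have h1 : δ / 2 * g n < dist (a n) (Ψ a n) :=
      lt_of_lt_of_le (haI n) (ciInf_le (bddBelow_dist_range _ _) ⟨Ψ a n, hbB n⟩)
    rw [hf]
    rw [le_div_iff₀ (hgpos n)]
    exact h1.le
  have hbdd : IsBoundedUnder (· ≤ ·) atTop f := by
    have h2 : Tendsto (fun n => dist (a n) p / g n + dist (Ψ a n) p / g n)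
        atTop (𝓝 (1 + lb)) := hone.add hbl
    refine h2.isBoundedUnder_le.mono_le (Eventually.of_forall fun n => ?_)
    simp only []
    rw [← add_div]
    refine div_le_div_of_nonneg_right ?_ (hgpos n).le
    calc dist (a n) (Ψ a n) ≤ dist (a n) p + dist p (Ψ a n) := dist_triangle _ _ _
    _ = dist (a n) p + dist (Ψ a n) p := by rw [dist_comm p]
  have : δ / 2 ≤ limsup f atTop :=
    le_limsup_of_frequently_le (Eventually.of_forall hlow).frequently hbdd
  rw [show limsup f atTop = dSup g a (Ψ a) from rfl, hzero] at this
  linarith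
end aux

theorem strongAsympEquiv_iff_eps_small {X : Type*} [MetricSpace X] (p : X)
    (Y Z : Set X)
    (hY : ∀ C : ℝ, ∃ y ∈ Y, C < dist y p) (hZ : ∀ C : ℝ, ∃ z ∈ Z, C < dist z p) :
    (∀ r : ℕ → ℝ, (∀ n, 0 < r n) → Tendsto r atTop atTop → AsympEquiv p r Y Z) ↔
      Tendsto (fun t => epsT p Y Z t / t) atTop (𝓝 0) := by
  obtain ⟨y₀, hy₀, -⟩ := hY 0
  obtain ⟨z₀, hz₀, -⟩ := hZ 0
  have hε0 : ∀ t, 0 ≤ epsT p Y Z t := fun t =>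
    le_trans (Real.iSup_nonneg fun a => Real.iInf_nonneg fun b => dist_nonneg)
      (le_max_left _ _)
  constructor
  · intro H
    by_contra hnot
    rw [Metric.tendsto_nhds] at hnot
    push_neg at hnot
    obtain ⟨δ, hδ, hfreq⟩ := hnot
    have hfreq2 : ∃ᶠ t in atTop,
        (δ * t ≤ ⨆ z : {z : X // z ∈ Z ∧ dist z p = t}, ⨅ y : Y, dist (z : X) (y : X)) ∨
        (δ * t ≤ ⨆ y : {y : X // y ∈ Y ∧ dist y p = t}, ⨅ z : Z, dist (y : X) (z : X)) := by
      refine (hfreq.and_eventually (eventually_ge_atTop (1:ℝ))).mono ?_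
      rintro t ⟨h1, ht1⟩
      have ht : (0:ℝ) < t := lt_of_lt_of_le zero_lt_one ht1
      rw [Real.dist_eq, sub_zero,
        abs_of_nonneg (div_nonneg (hε0 t) ht.le), le_div_iff₀ ht] at h1
      have h2 : δ * t ≤ epsT p Y Z t := by linarith [h1]
      rw [epsT] at h2
      exact le_max_iff.mp h2
    rw [frequently_or_distrib] at hfreq2
    rcases hfreq2 with hc | hc
    · obtain ⟨r, hr, hrtop, hnab⟩ := oneSideNec p Z Y δ hδ (frequently_atTop.mp hc)
      exact hnab ((H r hr hrtop).2)
    · obtain ⟨r, hr, hrtop, hnab⟩ := oneSideNec p Y Z δ hδ (frequently_atTop.mp hc)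
      exact hnab ((H r hr hrtop).1)
  · intro htend r hr hrtop
    set C : ℝ := max (dist y₀ p) (dist z₀ p) with hC
    have hlin : ∀ t, 0 ≤ t → epsT p Y Z t ≤ t + C := by
      intro t ht
      refine max_le ?_ ?_
      · exact (sup_le_lin p Z Y y₀ hy₀ t ht).trans
          (add_le_add_right (le_max_left _ _) t)
      · exact (sup_le_lin p Y Z z₀ hz₀ t ht).trans
          (add_le_add_right (le_max_right _ _) t)
    have happroxYZ : ∀ x ∈ Y, ∀ τ > (0:ℝ), ∃ b ∈ Z,
        dist x b ≤ epsT p Y Z (dist x p) + τ := by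
      intro x hx τ hτ
      obtain ⟨b, hb, hd⟩ := approx_pt p Y Z ⟨z₀, hz₀⟩ x hx τ hτ
      exact ⟨b, hb, hd.trans (add_le_add_left (le_max_right _ _) τ)⟩
    have happroxZY : ∀ x ∈ Z, ∀ τ > (0:ℝ), ∃ b ∈ Y,
        dist x b ≤ epsT p Y Z (dist x p) + τ := by
      intro x hx τ hτ
      obtain ⟨b, hb, hd⟩ := approx_pt p Z Y ⟨y₀, hy₀⟩ x hx τ hτ
      exact ⟨b, hb, hd.trans (add_le_add_left (le_max_left _ _) τ)⟩
    exact ⟨oneSideSuff p Y Z z₀ hz₀ _ hε0 C hlin happroxYZ htend r hr hrtop,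
      oneSideSuff p Z Y y₀ hy₀ _ hε0 C hlin happroxZY htend r hr hrtop⟩
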